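/- Let n ∈ ℕ and let p, d : Fin n → ℝ with 0 ≤ p j for all j, p monotone nondecreasing, and d monotone nondecreasing (the jobs are 'agreeable': indexed simultaneously in nondecreasing processing-time and nondecreasing due-date order). Then the identity schedule minimizes total tardiness: for every permutation σ of Fin n, ∑_{k} max(0, C_id(k) − d k) ≤ ∑_{k} max(0, C_σ(k) − d(σ k)), where C_id(k) = ∑_{j ≤ k} p j and C_σ(k) = ∑_{j ≤ k} p(σ j). -/

import Mathlib

open Finset

private lemma fin_le_apply {n : ℕ} (f : Fin n → Fin n) (h : StrictMono f) (x : Fin n) :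
    x ≤ f x := by
  have key : ∀ m : ℕ, ∀ y : Fin n, (y : ℕ) = m → y ≤ f y := by
    intro m
    induction m using Nat.strong_induction_on with
    | _ m ih =>
      intro y hy
      by_contra hc
      push_neg at hc
      have h1 : f y ≤ f (f y) := ih (f y) (by omega) (f y) rfl
      exact absurd (h hc) (not_lt.mpr h1)
  exact key (x : ℕ) x rfl

private lemma perm_eq_one_of_adj (n : ℕ) (σ : Equiv.Perm (Fin n))
    (h : ∀ k k' : Fin n, (k' : ℕ) = (k : ℕ) + 1 → σ k ≤ σ k') : σ = 1 := by
  have hmono : Monotone σ := by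
    intro a b hab
    obtain ⟨m, hm⟩ : ∃ m : ℕ, (b : ℕ) = (a : ℕ) + m := ⟨b - a, by omega⟩
    clear hab
    induction m generalizing b with
    | zero => have : a = b := by ext; omega
              simp [this]
    | succ m ih =>
      have hb : (m + (a : ℕ)) < n := by omega
      set c : Fin n := ⟨a + m, by omega⟩ with hc
      have h1 : σ a ≤ σ c := ih (b := c) (by simp [hc])
      have h2 : σ c ≤ σ b := h c b (by simp [hc]; omega)
      exact h1.trans h2
  have hsm : StrictMono σ := hmono.strictMono_of_injective σ.injective
  have hsm' : StrictMono ⇑σ⁻¹ := by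
    intro x y hxy
    by_contra hc
    push_neg at hc
    have := hmono hc
    simp only [Equiv.Perm.inv_def, Equiv.apply_symm_apply] at this
    exact absurd this (not_le.mpr hxy)
  ext x
  have h1 : x ≤ σ x := fin_le_apply _ hsm x
  have h2 : x ≤ σ⁻¹ x := fin_le_apply _ hsm' x
  have h3 : σ x ≤ x := by
    have := hmono h2
    simpa using this
  have : σ x = x := le_antisymm h3 h1
  simp [this]

private lemma exists_adj_inversion (n : ℕ) (σ : Equiv.Perm (Fin n)) (hσ : σ ≠ 1) :
    ∃ k k' : Fin n, (k' : ℕ) = (k : ℕ) + 1 ∧ σ k' < σ k := by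
  by_contra hcon
  push_neg at hcon
  exact hσ (perm_eq_one_of_adj n σ hcon)

private def invMeasure (n : ℕ) (σ : Equiv.Perm (Fin n)) : ℕ :=
  n * n * n + 1 - ∑ i : Fin n, (i : ℕ) * ((σ i : ℕ))

private lemma measure_bound (n : ℕ) (σ : Equiv.Perm (Fin n)) :
    ∑ i : Fin n, (i : ℕ) * ((σ i : ℕ)) ≤ n * n * n := by
  calc ∑ i : Fin n, (i : ℕ) * ((σ i : ℕ)) ≤ ∑ _i : Fin n, n * n := by
        apply Finset.sum_le_sum
        intro i _
        exact Nat.mul_le_mul (le_of_lt i.isLt) (le_of_lt (σ i).isLt)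
    _ = n * n * n := by simp [mul_comm]

private lemma measure_decrease (n : ℕ) (σ : Equiv.Perm (Fin n)) (k k' : Fin n)
    (hsucc : (k' : ℕ) = (k : ℕ) + 1) (hinv : σ k' < σ k) :
    invMeasure n (σ * Equiv.swap k k') < invMeasure n σ := by
  have hkk' : k ≠ k' := by intro h; rw [h] at hsucc; omega
  set τ := σ * Equiv.swap k k' with hτ
  have hsum : ∑ i : Fin n, (i : ℕ) * ((τ i : ℕ))
      = (∑ i : Fin n, (i : ℕ) * ((σ i : ℕ))) + ((σ k : ℕ) - (σ k' : ℕ)) := by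
    have split : ∀ h : Fin n → ℕ, ∑ m : Fin n, h m
        = ∑ m ∈ Finset.univ \ {k, k'}, h m + (h k + h k') := by
      intro h
      rw [← Finset.sum_pair hkk', Finset.sum_sdiff]
      intro x _; simp
    rw [split (fun i => (i : ℕ) * ((τ i : ℕ))), split (fun i => (i : ℕ) * ((σ i : ℕ)))]
    have hoth : ∀ m ∈ Finset.univ \ {k, k'}, (m : ℕ) * ((τ m : ℕ)) = (m : ℕ) * ((σ m : ℕ)) := by
      intro m hm
      simp only [Finset.mem_sdiff, Finset.mem_insert, Finset.mem_singleton] at hm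
      push_neg at hm
      simp [hτ, Equiv.swap_apply_of_ne_of_ne hm.2.1 hm.2.2]
    rw [Finset.sum_congr rfl hoth]
    have h1 : τ k = σ k' := by simp [hτ, Equiv.swap_apply_left]
    have h2 : τ k' = σ k := by simp [hτ, Equiv.swap_apply_right]
    rw [h1, h2]
    have : (σ k' : ℕ) < (σ k : ℕ) := hinv
    zify [this.le]
    push_cast [hsucc]
    ring
  have hb1 := measure_bound n σ
  have hb2 := measure_bound n τ
  have hlt : (σ k' : ℕ) < (σ k : ℕ) := hinv
  unfold invMeasure
  omega


private lemma key_max (u v x y : ℝ) (hu : u ≤ y) (hv : v ≤ y) (hs : u + v ≤ x + y) :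
    max 0 u + max 0 v ≤ max 0 x + max 0 y := by
  rcases le_total u 0 with h1 | h1 <;> rcases le_total v 0 with h2 | h2 <;>
    rcases le_total x 0 with h3 | h3 <;> rcases le_total y 0 with h4 | h4 <;>
    simp_all [max_eq_left, max_eq_right] <;> linarith

private lemma exchange_step (n : ℕ) (p d : Fin n → ℝ) (hp0 : ∀ j, 0 ≤ p j)
    (hp : Monotone p) (hd : Monotone d) (σ : Equiv.Perm (Fin n))
    (k k' : Fin n) (hsucc : (k' : ℕ) = (k : ℕ) + 1)
    (hinv : σ k' < σ k) :
    (∑ m : Fin n, max 0 ((∑ j ∈ Finset.Iic m, p ((σ * Equiv.swap k k') j))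
        - d ((σ * Equiv.swap k k') m))) ≤
      (∑ m : Fin n, max 0 ((∑ j ∈ Finset.Iic m, p (σ j)) - d (σ m))) := by
  have hklt : k < k' := by simp [Fin.lt_def, hsucc]
  set τ : Equiv.Perm (Fin n) := σ * Equiv.swap k k' with hτ
  have hkk' : k ≠ k' := ne_of_lt hklt
  have hswap : ∀ j : Fin n, j ≠ k → j ≠ k' → Equiv.swap k k' j = j := fun j h1 h2 =>
    Equiv.swap_apply_of_ne_of_ne h1 h2
  set a : Fin n := σ k' with ha
  set b : Fin n := σ k with hb
  have hab : a < b := hinv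
  have hτk : τ k = a := by simp [hτ, Equiv.swap_apply_left, ha]
  have hτk' : τ k' = b := by simp [hτ, Equiv.swap_apply_right, hb]
  have hτother : ∀ j : Fin n, j ≠ k → j ≠ k' → τ j = σ j := by
    intro j h1 h2; simp [hτ, hswap j h1 h2]
  set t : ℝ := ∑ j ∈ Finset.Iio k, p (σ j) with ht
  -- completion times
  have hIick : Finset.Iic k = insert k (Finset.Iio k) := by
    rw [Finset.Iio_insert]
  have hIick' : Finset.Iic k' = insert k' (Finset.Iic k) := by
    ext j; simp only [Finset.mem_insert, Finset.mem_Iic, Fin.le_def, Fin.ext_iff]; omega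
  have hknotmem : k ∉ Finset.Iio k := by simp
  have hk'notmem : k' ∉ Finset.Iic k := by
    simp [Fin.le_def, hsucc]
  have hCσk : ∑ j ∈ Finset.Iic k, p (σ j) = t + p b := by
    rw [hIick, Finset.sum_insert hknotmem]; ring
  have hCσk' : ∑ j ∈ Finset.Iic k', p (σ j) = t + p b + p a := by
    rw [hIick', Finset.sum_insert hk'notmem, hCσk]; ring
  have hCτk : ∑ j ∈ Finset.Iic k, p (τ j) = t + p a := by
    rw [hIick, Finset.sum_insert hknotmem, hτk]
    have : ∑ j ∈ Finset.Iio k, p (τ j) = t := by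
      apply Finset.sum_congr rfl
      intro j hj
      have hj' : j < k := by simpa using hj
      rw [hτother j (ne_of_lt hj') (ne_of_lt (hj'.trans hklt))]
    rw [this]; ring
  -- for positions containing both k and k', sums agree (swap permutes the set)
  have hCeq_big : ∀ m : Fin n, k' ≤ m →
      ∑ j ∈ Finset.Iic m, p (τ j) = ∑ j ∈ Finset.Iic m, p (σ j) := by
    intro m hm
    have hkm : k ≤ m := le_trans hklt.le hm
    apply Finset.sum_equiv (Equiv.swap k k')
    · intro j
      simp only [Finset.mem_Iic]
      constructor
      · intro hj
        rcases eq_or_ne j k with rfl | h1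
        · rw [Equiv.swap_apply_left]; exact hm
        rcases eq_or_ne j k' with rfl | h2
        · rw [Equiv.swap_apply_right]; exact hkm
        · rw [hswap j h1 h2]; exact hj
      · intro hj
        rcases eq_or_ne j k with rfl | h1
        · exact hkm
        rcases eq_or_ne j k' with rfl | h2
        · exact hm
        · rwa [hswap j h1 h2] at hj
    · intro j _
      simp [hτ]
  have hCeq_small : ∀ m : Fin n, m < k →
      ∑ j ∈ Finset.Iic m, p (τ j) = ∑ j ∈ Finset.Iic m, p (σ j) := by
    intro m hm
    apply Finset.sum_congr rfl
    intro j hj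
    have hj' : j ≤ m := by simpa using hj
    have h1 : j ≠ k := ne_of_lt (lt_of_le_of_lt hj' hm)
    have h2 : j ≠ k' := ne_of_lt (lt_of_le_of_lt hj' (hm.trans hklt))
    rw [hτother j h1 h2]
  -- per-index functions
  set f : Fin n → ℝ := fun m => max 0 ((∑ j ∈ Finset.Iic m, p (σ j)) - d (σ m)) with hf
  set g : Fin n → ℝ := fun m => max 0 ((∑ j ∈ Finset.Iic m, p (τ j)) - d (τ m)) with hg
  have hother : ∀ m ∈ Finset.univ \ {k, k'}, g m = f m := by
    intro m hm
    simp only [Finset.mem_sdiff, Finset.mem_insert, Finset.mem_singleton] at hm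
    push_neg at hm
    obtain ⟨-, h1, h2⟩ := hm
    have hc : ∑ j ∈ Finset.Iic m, p (τ j) = ∑ j ∈ Finset.Iic m, p (σ j) := by
      rcases lt_or_ge m k with h | h
      · exact hCeq_small m h
      · apply hCeq_big
        rcases lt_or_eq_of_le h with h | h
        · have : k' ≤ m := by
            simp only [Fin.le_def, hsucc]; simp only [Fin.lt_def] at h; omega
          exact this
        · exact absurd h.symm h1
    simp [hg, hf, hc, hτother m h1 h2]
  have hpair : g k + g k' ≤ f k + f k' := by
    have h1 : g k = max 0 (t + p a - d a) := by rw [hg]; simp only [hCτk, hτk]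
    have h2 : g k' = max 0 (t + p a + p b - d b) := by
      rw [hg]; simp only [hCeq_big k' le_rfl, hCσk', hτk']
      ring_nf
    have h3 : f k = max 0 (t + p b - d b) := by rw [hf]; simp only [hCσk, hb]
    have h4 : f k' = max 0 (t + p b + p a - d a) := by rw [hf]; simp only [hCσk', ha]
    rw [h1, h2, h3, h4]
    have hpa : p a ≤ p b := hp hab.le
    have hda : d a ≤ d b := hd hab.le
    apply key_max <;> [skip; skip; skip] <;> nlinarith [hp0 a, hp0 b]
  -- combine
  have split : ∀ h : Fin n → ℝ, ∑ m : Fin n, h m = ∑ m ∈ Finset.univ \ {k, k'}, h m + (h k + h k') := by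
    intro h
    rw [← Finset.sum_pair hkk', Finset.sum_sdiff]
    intro x hx; simp
  calc ∑ m : Fin n, g m = ∑ m ∈ Finset.univ \ {k, k'}, g m + (g k + g k') := split g
    _ ≤ ∑ m ∈ Finset.univ \ {k, k'}, f m + (f k + f k') := by
        exact add_le_add (le_of_eq (Finset.sum_congr rfl hother)) hpair
    _ = ∑ m : Fin n, f m := (split f).symm

/-- For agreeable jobs (indexed simultaneously in nondecreasing processing-time
and nondecreasing due-date order, with nonnegative processing times), the
identity schedule minimizes total tardiness. -/
theorem agreeable_jobs_identity_minimizes_total_tardiness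
    (n : ℕ) (p d : Fin n → ℝ)
    (hp0 : ∀ j, 0 ≤ p j) (hp : Monotone p) (hd : Monotone d)
    (σ : Equiv.Perm (Fin n)) :
    (∑ k : Fin n, max 0 ((∑ j ∈ Finset.Iic k, p j) - d k)) ≤
      (∑ k : Fin n, max 0 ((∑ j ∈ Finset.Iic k, p (σ j)) - d (σ k))) := by
  have main : ∀ m : ℕ, ∀ τ : Equiv.Perm (Fin n), invMeasure n τ ≤ m →
      (∑ k : Fin n, max 0 ((∑ j ∈ Finset.Iic k, p j) - d k)) ≤
        (∑ k : Fin n, max 0 ((∑ j ∈ Finset.Iic k, p (τ j)) - d (τ k))) := by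
    intro m
    induction m with
    | zero =>
      intro τ hτ
      have := measure_bound n τ
      unfold invMeasure at hτ
      omega
    | succ m ih =>
      intro τ hτ
      by_cases hone : τ = 1
      · subst hone
        simp
      · obtain ⟨k, k', hsucc, hinv⟩ := exists_adj_inversion n τ hone
        have hstep := exchange_step n p d hp0 hp hd τ k k' hsucc hinv
        have hdec := measure_decrease n τ k k' hsucc hinv
        exact le_trans (ih (τ * Equiv.swap k k') (by omega)) hstep
  exact main (invMeasure n σ) σ le_rfl
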